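/- Under the deterministic UCB1 setup, suppose that for every arm i the partial averages m ↦ (1/m) ∑_{u=1}^m x i u converge to a limit μ i as m → ∞, that there is a unique arm i* with μ* := μ i* = max_i μ i, and that the selection sequence obeys the UCB1 rule with constant C > 0. Then the running average of the collected rewards converges to the optimal mean: (1/n) ∑_{t=1}^n x (I t) (T (I t) t) → μ* as n → ∞. -/

import Mathlib

open Finset Filter

/-- Number of pulls of arm `i` among rounds `1, …, t`. -/
noncomputable def pullCount {K : ℕ} (I : ℕ → Fin K) (i : Fin K) (t : ℕ) : ℕ :=
  ((Finset.Icc 1 t).filter (fun s => I s = i)).card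

/-- Empirical mean of arm `i` after round `t` (equal to `0` when the arm was never pulled). -/
noncomputable def empMean {K : ℕ} (x : Fin K → ℕ → ℝ) (I : ℕ → Fin K) (i : Fin K) (t : ℕ) : ℝ :=
  if pullCount I i t = 0 then 0
  else (1 / (pullCount I i t : ℝ)) * ∑ u ∈ Finset.Icc 1 (pullCount I i t), x i u

/-- The selection sequence `I` obeys the UCB1 rule with constant `C`. -/
def UCB1Rule {K : ℕ} (x : Fin K → ℕ → ℝ) (I : ℕ → Fin K) (C : ℝ) : Prop :=
  ∀ t : ℕ, 1 ≤ t →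
    if ∃ i : Fin K, pullCount I i (t - 1) = 0 then pullCount I (I t) (t - 1) = 0
    else ∀ j : Fin K,
      empMean x I j (t - 1) + Real.sqrt (C * Real.log t / (pullCount I j (t - 1) : ℝ))
        ≤ empMean x I (I t) (t - 1)
            + Real.sqrt (C * Real.log t / (pullCount I (I t) (t - 1) : ℝ))

lemma pc_zero {K : ℕ} (I : ℕ → Fin K) (i : Fin K) : pullCount I i 0 = 0 := by
  simp [pullCount]

lemma pc_succ {K : ℕ} (I : ℕ → Fin K) (i : Fin K) (t : ℕ) :
    pullCount I i (t+1) = pullCount I i t + (if I (t+1) = i then 1 else 0) := by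
  unfold pullCount
  rw [show Finset.Icc 1 (t+1) = insert (t+1) (Finset.Icc 1 t) from
    (Finset.insert_Icc_right_eq_Icc_add_one (by omega)).symm, Finset.filter_insert]
  split
  · rw [Finset.card_insert_of_notMem (by simp)]
  · simp

lemma pc_mono {K : ℕ} (I : ℕ → Fin K) (i : Fin K) : Monotone (pullCount I i) := by
  apply monotone_nat_of_le_succ
  intro t; rw [pc_succ]; omega

lemma pc_sum {K : ℕ} (I : ℕ → Fin K) (t : ℕ) :
    ∑ i : Fin K, pullCount I i t = t := by
  induction t with
  | zero => simp [pc_zero]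
  | succ t ih =>
    simp only [pc_succ, Finset.sum_add_distrib, ih, Finset.sum_ite_eq]
    simp

lemma pc_le {K : ℕ} [NeZero K] (I : ℕ → Fin K) (i : Fin K) (t : ℕ) : pullCount I i t ≤ t := by
  calc pullCount I i t
      ≤ ∑ j : Fin K, pullCount I j t :=
        Finset.single_le_sum (f := fun j => pullCount I j t)
          (fun j _ => Nat.zero_le _) (Finset.mem_univ i)
    _ = t := pc_sum I t

lemma pc_split {K : ℕ} (I : ℕ → Fin K) (j : Fin K) {a b : ℕ} (hab : a ≤ b) :
    pullCount I j b
      = pullCount I j a + ((Finset.Ioc a b).filter (fun s => I s = j)).card := by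
  unfold pullCount
  rw [show Finset.Icc 1 b = Finset.Icc 1 a ∪ Finset.Ioc a b by
      ext s
      simp only [Finset.mem_union, Finset.mem_Icc, Finset.mem_Ioc]
      omega,
    Finset.filter_union,
    Finset.card_union_of_disjoint (by
      rw [Finset.disjoint_left]
      intro s hs hs'
      simp only [Finset.mem_filter, Finset.mem_Icc, Finset.mem_Ioc] at hs hs'
      omega)]

lemma exists_pull {K : ℕ} (hK : 2 ≤ K) (x : Fin K → ℕ → ℝ) (I : ℕ → Fin K)
    (C : ℝ) (hUCB : UCB1Rule x I C) (i : Fin K) : ∃ t, 1 ≤ pullCount I i t := by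
  by_contra h
  push_neg at h
  have hz : ∀ t, pullCount I i t = 0 := fun t => by have := h t; omega
  have hbr : ∀ t, 1 ≤ t → pullCount I (I t) (t-1) = 0 := by
    intro t ht
    have h' := hUCB t ht
    rwa [if_pos ⟨i, hz _⟩] at h'
  have key : ∀ (j : Fin K) (a b : ℕ), 1 ≤ a → a < b → I a = j → I b = j → False := by
    intro j a b ha hab hIa hIb
    have h0 := hbr b (by omega)
    rw [hIb] at h0
    have hpos : 0 < pullCount I j (b-1) :=
      Finset.card_pos.mpr ⟨a, Finset.mem_filter.mpr
        ⟨Finset.mem_Icc.mpr ⟨ha, by omega⟩, hIa⟩⟩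
    omega
  have honce : ∀ (j : Fin K) (t : ℕ), pullCount I j t ≤ 1 := by
    intro j t
    refine Finset.card_le_one.mpr ?_
    intro a ha b hb
    simp only [Finset.mem_filter, Finset.mem_Icc] at ha hb
    rcases lt_trichotomy a b with h' | h' | h'
    · exact absurd (key j a b ha.1.1 h' ha.2 hb.2) (fun q => q)
    · exact h'
    · exact absurd (key j b a hb.1.1 h' hb.2 ha.2) (fun q => q)
  have hsum := pc_sum I (K+1)
  have : ∑ j : Fin K, pullCount I j (K+1) ≤ ∑ _j : Fin K, 1 :=
    Finset.sum_le_sum (fun j _ => honce j (K+1))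
  simp only [Finset.sum_const, Finset.card_univ, Fintype.card_fin, smul_eq_mul, mul_one] at this
  omega

lemma exists_empBound {K : ℕ} (x : Fin K → ℕ → ℝ) (I : ℕ → Fin K) (μ : Fin K → ℝ)
    (hconv : ∀ i : Fin K,
      Tendsto (fun m : ℕ => (1 / (m : ℝ)) * ∑ u ∈ Finset.Icc 1 m, x i u) atTop (nhds (μ i))) :
    ∃ B : ℝ, 0 ≤ B ∧ ∀ (i : Fin K) (t : ℕ), |empMean x I i t| ≤ B := by
  have h1 : ∀ i : Fin K, ∃ Bi : ℝ,
      ∀ m : ℕ, |(1 / (m : ℝ)) * ∑ u ∈ Finset.Icc 1 m, x i u| ≤ Bi := by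
    intro i
    obtain ⟨ub, hub⟩ := (hconv i).bddAbove_range
    obtain ⟨lb, hlb⟩ := (hconv i).bddBelow_range
    refine ⟨max ub (-lb), fun m => abs_le.mpr ⟨?_, ?_⟩⟩
    · have := hlb (Set.mem_range_self m)
      have h2 : -max ub (-lb) ≤ lb := by
        have := le_max_right ub (-lb); linarith
      linarith
    · exact le_trans (hub (Set.mem_range_self m)) (le_max_left _ _)
  choose Bi hBi using h1
  refine ⟨∑ i : Fin K, max (Bi i) 0, Finset.sum_nonneg (fun i _ => le_max_right _ _), ?_⟩
  intro i t
  have hile : max (Bi i) 0 ≤ ∑ i' : Fin K, max (Bi i') 0 :=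
    Finset.single_le_sum (f := fun i' => max (Bi i') 0)
      (fun i' _ => le_max_right _ _) (Finset.mem_univ i)
  unfold empMean
  split
  · simpa using le_trans (le_max_right (Bi i) 0) hile
  · exact le_trans (le_trans (hBi i _) (le_max_left _ _)) hile

lemma pc_tendsto_atTop {K : ℕ} (hK : 2 ≤ K) (x : Fin K → ℕ → ℝ) (I : ℕ → Fin K)
    (μ : Fin K → ℝ)
    (hconv : ∀ i : Fin K,
      Tendsto (fun m : ℕ => (1 / (m : ℝ)) * ∑ u ∈ Finset.Icc 1 m, x i u) atTop (nhds (μ i)))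
    (C : ℝ) (hC : 0 < C) (hUCB : UCB1Rule x I C) (i : Fin K) :
    Tendsto (pullCount I i) atTop atTop := by
  obtain ⟨B, hB0, hB⟩ := exists_empBound x I μ hconv
  choose t0 ht0 using exists_pull hK x I C hUCB
  have hN0 : ∀ i' : Fin K, 1 ≤ pullCount I i' (Finset.univ.sup t0) := fun i' =>
    le_trans (ht0 i') (pc_mono I i' (Finset.le_sup (Finset.mem_univ i')))
  obtain ⟨N0, hN0⟩ : ∃ N0, ∀ i' : Fin K, 1 ≤ pullCount I i' N0 := ⟨_, hN0⟩
  refine tendsto_atTop_atTop_of_monotone (pc_mono I i) ?_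
  by_contra h
  push_neg at h
  obtain ⟨M, hM⟩ := h
  have hM1 : 1 ≤ M := le_of_lt (lt_of_le_of_lt (hN0 i) (hM N0))
  have hD0 : (0:ℝ) ≤ 2*B + Real.sqrt (4*K*C) := by positivity
  have hM0 : (0:ℝ) < (M:ℝ) := by exact_mod_cast (show 0 < M by omega)
  have hTtop : Tendsto (fun T : ℕ => C * Real.log (T+1) / M) atTop atTop := by
    apply Tendsto.atTop_div_const hM0
    apply Tendsto.const_mul_atTop hC
    exact Real.tendsto_log_atTop.comp
      (tendsto_atTop_add_const_right _ _ tendsto_natCast_atTop_atTop)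
  obtain ⟨T, hTgt, hTge⟩ :=
    ((hTtop.eventually_gt_atTop ((2*B + Real.sqrt (4*K*C))^2)).and
      (eventually_ge_atTop (N0 + 2*K + 1))).exists
  have hT1 : 1 ≤ T := by omega
  -- pigeonhole on the window (T, 2T]
  have hle : ∀ j : Fin K, pullCount I j T ≤ pullCount I j (2*T) :=
    fun j => pc_mono I j (by omega)
  have hsumd : ∑ j : Fin K, (pullCount I j (2*T) - pullCount I j T) = T := by
    have h2 : ∑ j : Fin K, (pullCount I j T + (pullCount I j (2*T) - pullCount I j T))
        = 2*T := by
      rw [Finset.sum_congr rfl (fun j _ => Nat.add_sub_cancel' (hle j))]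
      exact pc_sum I (2*T)
    rw [Finset.sum_add_distrib, pc_sum I T] at h2
    omega
  have : Nonempty (Fin K) := ⟨⟨0, by omega⟩⟩
  have hpig : ∑ _j : Fin K, T ≤ ∑ j : Fin K, K * (pullCount I j (2*T) - pullCount I j T) := by
    rw [← Finset.mul_sum, hsumd]
    simp [Finset.card_univ, Fintype.card_fin]
  obtain ⟨j, -, hj⟩ := Finset.exists_le_of_sum_le Finset.univ_nonempty hpig
  have hd1 : 1 ≤ pullCount I j (2*T) - pullCount I j T := by
    rcases Nat.eq_zero_or_pos (pullCount I j (2*T) - pullCount I j T) with h0 | h0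
    · rw [h0, Nat.mul_zero] at hj; omega
    · exact h0
  -- last pull of j in the window
  have hFcard : pullCount I j (2*T)
      = pullCount I j T + ((Finset.Ioc T (2*T)).filter (fun s => I s = j)).card :=
    pc_split I j (by omega)
  have hFne : ((Finset.Ioc T (2*T)).filter (fun s => I s = j)).Nonempty := by
    rw [← Finset.card_pos]; omega
  obtain ⟨ts, htsmem, htsmax⟩ : ∃ ts ∈ (Finset.Ioc T (2*T)).filter (fun s => I s = j),
      ∀ s ∈ (Finset.Ioc T (2*T)).filter (fun s => I s = j), s ≤ ts :=
    ⟨_, Finset.max'_mem _ hFne, fun s hs => Finset.le_max' _ s hs⟩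
  simp only [Finset.mem_filter, Finset.mem_Ioc] at htsmem
  obtain ⟨⟨hts1, hts2⟩, htsj⟩ := htsmem
  have hafter : ((Finset.Ioc ts (2*T)).filter (fun s => I s = j)).card = 0 := by
    rw [Finset.card_eq_zero, Finset.eq_empty_iff_forall_notMem]
    intro s hs
    simp only [Finset.mem_filter, Finset.mem_Ioc] at hs
    have hsF := htsmax s (Finset.mem_filter.mpr
      ⟨Finset.mem_Ioc.mpr ⟨by omega, hs.1.2⟩, hs.2⟩)
    omega
  have h2T : pullCount I j (2*T) = pullCount I j ts := by
    rw [pc_split I j (show ts ≤ 2*T by omega), hafter]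
    omega
  have hstep : pullCount I j ts = pullCount I j (ts - 1) + 1 := by
    have hts' : ts = (ts - 1) + 1 := by omega
    rw [hts', pc_succ, ← hts', if_pos htsj]
  -- counts at ts - 1
  have hqT : T ≤ K * (pullCount I j (ts-1) + 1) :=
    le_trans hj (Nat.mul_le_mul_left K (by omega))
  have hq1 : 1 ≤ pullCount I j (ts-1) := le_trans (hN0 j) (pc_mono I j (by omega))
  have hp1 : 1 ≤ pullCount I i (ts-1) := le_trans (hN0 i) (pc_mono I i (by omega))
  have hpM : pullCount I i (ts-1) < M := hM (ts-1)
  -- apply the UCB rule at time ts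
  have hrule := hUCB ts (by omega)
  rw [if_neg (by
    rintro ⟨i', hi'⟩
    have := le_trans (hN0 i') (pc_mono I i' (show N0 ≤ ts - 1 by omega))
    omega)] at hrule
  have hkey := hrule i
  rw [htsj] at hkey
  -- real arithmetic
  have hpr1 : (1:ℝ) ≤ (pullCount I i (ts-1) : ℝ) := by exact_mod_cast hp1
  have hprM : (pullCount I i (ts-1) : ℝ) ≤ (M:ℝ) := by exact_mod_cast hpM.le
  have hqr1 : (1:ℝ) ≤ (pullCount I j (ts-1) : ℝ) := by exact_mod_cast hq1
  have hqrT : (T:ℝ) ≤ K * ((pullCount I j (ts-1) : ℝ) + 1) := by exact_mod_cast hqT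
  have hlog0 : 0 ≤ Real.log ts := Real.log_nonneg (by exact_mod_cast (show 1 ≤ ts by omega))
  have hlogT : Real.log (T+1) ≤ Real.log ts := by
    apply Real.log_le_log (by positivity)
    exact_mod_cast (show T + 1 ≤ ts by omega)
  have hlog2T : Real.log ts ≤ Real.log (2*(T:ℝ)) := by
    apply Real.log_le_log (by exact_mod_cast (show 0 < ts by omega))
    exact_mod_cast (show ts ≤ 2*T by omega)
  -- A1
  have hA1 : Real.sqrt (C * Real.log (T+1) / M)
      ≤ Real.sqrt (C * Real.log ts / (pullCount I i (ts-1) : ℝ)) := by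
    apply Real.sqrt_le_sqrt
    apply div_le_div₀ (by positivity) (by nlinarith) (by linarith) (by linarith)
  -- A2
  have hBi := abs_le.mp (hB i (ts-1))
  have hBj := abs_le.mp (hB j (ts-1))
  have hA2 : Real.sqrt (C * Real.log ts / (pullCount I i (ts-1) : ℝ))
      ≤ 2*B + Real.sqrt (C * Real.log ts / (pullCount I j (ts-1) : ℝ)) := by
    linarith [hkey, hBi.1, hBi.2, hBj.1, hBj.2]
  -- A3
  have hA3 : Real.sqrt (C * Real.log ts / (pullCount I j (ts-1) : ℝ))
      ≤ Real.sqrt (4*K*C) := by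
    apply Real.sqrt_le_sqrt
    rw [div_le_iff₀ (by linarith)]
    have hKr : (2:ℝ) ≤ (K:ℝ) := by exact_mod_cast hK
    have hlogbd : Real.log ts ≤ 2*(T:ℝ) - 1 := by
      have hTr1 : (1:ℝ) ≤ (T:ℝ) := by exact_mod_cast hT1
      have := Real.log_le_sub_one_of_pos (show (0:ℝ) < 2*(T:ℝ) by linarith)
      linarith
    have hT2K : (2:ℝ)*K ≤ (T:ℝ) := by exact_mod_cast (show 2*K ≤ T by omega)
    have hexp : (K:ℝ)*((pullCount I j (ts-1) : ℝ)+1)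
        = (K:ℝ)*(pullCount I j (ts-1) : ℝ) + K := by ring
    have hlin : 2*(T:ℝ) - 1 ≤ 4*((K:ℝ)*(pullCount I j (ts-1) : ℝ)) := by linarith
    have hm1 : C * Real.log ts ≤ C * (2*(T:ℝ) - 1) :=
      mul_le_mul_of_nonneg_left hlogbd hC.le
    have hm2 : C * (2*(T:ℝ) - 1) ≤ C * (4*((K:ℝ)*(pullCount I j (ts-1) : ℝ))) :=
      mul_le_mul_of_nonneg_left hlin hC.le
    have e : C * (4*((K:ℝ)*(pullCount I j (ts-1) : ℝ)))
        = 4*K*C*(pullCount I j (ts-1) : ℝ) := by ring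
    linarith
  -- contradiction
  have hgt : 2*B + Real.sqrt (4*K*C) < Real.sqrt (C * Real.log (T+1) / M) :=
    (Real.lt_sqrt hD0).mpr hTgt
  linarith

lemma reward_decomp {K : ℕ} (x : Fin K → ℕ → ℝ) (I : ℕ → Fin K) (n : ℕ) :
    ∑ t ∈ Finset.Icc 1 n, x (I t) (pullCount I (I t) t)
      = ∑ i : Fin K, ∑ u ∈ Finset.Icc 1 (pullCount I i n), x i u := by
  induction n with
  | zero => simp [pc_zero]
  | succ n ih =>
    have hL : ∑ t ∈ Finset.Icc 1 (n+1), x (I t) (pullCount I (I t) t)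
        = (∑ t ∈ Finset.Icc 1 n, x (I t) (pullCount I (I t) t))
          + x (I (n+1)) (pullCount I (I (n+1)) (n+1)) := by
      rw [← Finset.insert_Icc_right_eq_Icc_add_one (show (1:ℕ) ≤ n+1 by omega),
        Finset.sum_insert (by simp), add_comm]
    have hpc0 : pullCount I (I (n+1)) (n+1) = pullCount I (I (n+1)) n + 1 := by
      rw [pc_succ]; simp
    have hother : ∀ i : Fin K, i ≠ I (n+1) → pullCount I i (n+1) = pullCount I i n := by
      intro i hi; rw [pc_succ]; simp [Ne.symm hi]
    rw [hL, ih]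
    rw [← Finset.add_sum_erase _ (fun i => ∑ u ∈ Finset.Icc 1 (pullCount I i (n+1)), x i u)
      (Finset.mem_univ (I (n+1))),
      ← Finset.add_sum_erase _ (fun i => ∑ u ∈ Finset.Icc 1 (pullCount I i n), x i u)
      (Finset.mem_univ (I (n+1)))]
    have h1 : ∑ u ∈ Finset.Icc 1 (pullCount I (I (n+1)) (n+1)), x (I (n+1)) u
        = (∑ u ∈ Finset.Icc 1 (pullCount I (I (n+1)) n), x (I (n+1)) u)
          + x (I (n+1)) (pullCount I (I (n+1)) (n+1)) := by
      rw [hpc0, ← Finset.insert_Icc_right_eq_Icc_add_one (by omega), Finset.sum_insert (by simp), add_comm]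
    have h2 : ∑ i ∈ Finset.univ.erase (I (n+1)), ∑ u ∈ Finset.Icc 1 (pullCount I i (n+1)), x i u
        = ∑ i ∈ Finset.univ.erase (I (n+1)), ∑ u ∈ Finset.Icc 1 (pullCount I i n), x i u :=
      Finset.sum_congr rfl (fun i hi => by rw [hother i (Finset.ne_of_mem_erase hi)])
    rw [h1, h2]; ring

lemma emp_tendsto {K : ℕ} (hK : 2 ≤ K) (x : Fin K → ℕ → ℝ) (I : ℕ → Fin K)
    (μ : Fin K → ℝ)
    (hconv : ∀ i : Fin K,
      Tendsto (fun m : ℕ => (1 / (m : ℝ)) * ∑ u ∈ Finset.Icc 1 m, x i u) atTop (nhds (μ i)))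
    (C : ℝ) (hC : 0 < C) (hUCB : UCB1Rule x I C) (j : Fin K) :
    Tendsto (fun t => empMean x I j t) atTop (nhds (μ j)) := by
  have hpc := pc_tendsto_atTop hK x I μ hconv C hC hUCB j
  have h1 : Tendsto (fun t => (1 / (pullCount I j t : ℝ))
      * ∑ u ∈ Finset.Icc 1 (pullCount I j t), x j u) atTop (nhds (μ j)) :=
    (hconv j).comp hpc
  apply h1.congr'
  filter_upwards [hpc.eventually_ge_atTop 1] with t ht
  unfold empMean
  rw [if_neg (by omega)]

lemma pc_div_tendsto_zero {K : ℕ} (hK : 2 ≤ K) (x : Fin K → ℕ → ℝ) (I : ℕ → Fin K)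
    (μ : Fin K → ℝ)
    (hconv : ∀ i : Fin K,
      Tendsto (fun m : ℕ => (1 / (m : ℝ)) * ∑ u ∈ Finset.Icc 1 m, x i u) atTop (nhds (μ i)))
    (istar : Fin K)
    (huniq : ∀ i : Fin K, i ≠ istar → μ i < μ istar)
    (C : ℝ) (hC : 0 < C) (hUCB : UCB1Rule x I C) (i : Fin K) (hne : i ≠ istar) :
    Tendsto (fun n : ℕ => (pullCount I i n : ℝ) / n) atTop (nhds 0) := by
  have : NeZero K := ⟨by omega⟩
  have hΔ : 0 < μ istar - μ i := by have := huniq i hne; linarith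
  have hemp_i := emp_tendsto hK x I μ hconv C hC hUCB i
  have hemp_s := emp_tendsto hK x I μ hconv C hC hUCB istar
  have hpc := fun j => pc_tendsto_atTop hK x I μ hconv C hC hUCB j
  have hall : ∀ᶠ t in atTop, ∀ j : Fin K, 1 ≤ pullCount I j t :=
    eventually_all.mpr (fun j => (hpc j).eventually_ge_atTop 1)
  obtain ⟨N, hN⟩ := eventually_atTop.mp
    ((hemp_i.eventually_lt_const (show μ i < μ i + (μ istar - μ i)/4 by linarith)).and
      ((hemp_s.eventually_const_lt
          (show μ istar - (μ istar - μ i)/4 < μ istar by linarith)).and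
        (hall.and (eventually_ge_atTop 1))))
  have hN1 : 1 ≤ N := (hN N le_rfl).2.2.2
  have claim : ∀ t : ℕ, N + 1 ≤ t → I t = i →
      (pullCount I i (t-1) : ℝ) * ((μ istar - μ i)/2)^2 < C * Real.log t := by
    intro t ht hIt
    obtain ⟨h1, h2, h3, h4⟩ := hN (t-1) (by omega)
    have hrule := hUCB t (by omega)
    rw [if_neg (by rintro ⟨i', hi'⟩; have := h3 i'; omega)] at hrule
    have hkey := hrule istar
    rw [hIt] at hkey
    have hs0 : 0 ≤ Real.sqrt (C * Real.log t / (pullCount I istar (t-1) : ℝ)) :=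
      Real.sqrt_nonneg _
    have hΔ2 : (μ istar - μ i)/2
        < Real.sqrt (C * Real.log t / (pullCount I i (t-1) : ℝ)) := by linarith
    have hsq := (Real.lt_sqrt (by linarith)).mp hΔ2
    have hppos : (0:ℝ) < (pullCount I i (t-1) : ℝ) := by exact_mod_cast h3 i
    rw [lt_div_iff₀ hppos] at hsq
    linarith
  have hΔ2pos : (0:ℝ) < ((μ istar - μ i)/2)^2 := by positivity
  have hbound : ∀ n, N ≤ n →
      (pullCount I i n : ℝ) ≤ (N:ℝ) + 1 + C * Real.log n / ((μ istar - μ i)/2)^2 := by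
    intro n hn
    induction n, hn using Nat.le_induction with
    | base =>
      have h1 : (pullCount I i N : ℝ) ≤ (N:ℝ) := by exact_mod_cast pc_le I i N
      have h2 : 0 ≤ Real.log N := Real.log_nonneg (by exact_mod_cast hN1)
      have : 0 ≤ C * Real.log N / ((μ istar - μ i)/2)^2 := by positivity
      linarith
    | succ n hn ih =>
      have hn1 : (1:ℝ) ≤ (n:ℝ) := by exact_mod_cast le_trans hN1 hn
      have hlogmono : Real.log n ≤ Real.log (n+1) := by
        apply Real.log_le_log (by linarith)
        linarith
      have hmono : C * Real.log n / ((μ istar - μ i)/2)^2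
          ≤ C * Real.log (n+1) / ((μ istar - μ i)/2)^2 := by
        exact (div_le_div_iff_of_pos_right hΔ2pos).mpr (mul_le_mul_of_nonneg_left hlogmono hC.le)
      rw [pc_succ]
      split
      · next hIt =>
        have hc := claim (n+1) (by omega) hIt
        have : (pullCount I i n : ℝ) ≤ C * Real.log (n+1) / ((μ istar - μ i)/2)^2 := by
          rw [le_div_iff₀ hΔ2pos]
          push_cast at hc ⊢
          linarith [hc]
        push_cast
        push_cast at this
        linarith
      · next hIt =>
        push_cast
        push_cast at ih
        linarith
  -- squeeze
  have hlogdiv : Tendsto (fun n : ℕ => Real.log n / (n:ℝ)) atTop (nhds 0) :=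
    (Real.isLittleO_log_id_atTop.tendsto_div_nhds_zero).comp tendsto_natCast_atTop_atTop
  have hg0 : Tendsto (fun n : ℕ =>
      ((N:ℝ) + 1)/(n:ℝ) + (C / ((μ istar - μ i)/2)^2) * (Real.log n / (n:ℝ)))
      atTop (nhds 0) := by
    have h1 := tendsto_const_div_atTop_nhds_zero_nat ((N:ℝ) + 1)
    have h2 := hlogdiv.const_mul (C / ((μ istar - μ i)/2)^2)
    simpa using h1.add h2
  apply squeeze_zero' (g := fun n : ℕ =>
      ((N:ℝ) + 1)/(n:ℝ) + (C / ((μ istar - μ i)/2)^2) * (Real.log n / (n:ℝ))) ?_ ?_ hg0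
  · filter_upwards [eventually_ge_atTop 1] with n hn
    positivity
  · filter_upwards [eventually_ge_atTop (max N 1)] with n hn
    have hn1 : 1 ≤ n := le_trans (le_max_right N 1) hn
    have hnN : N ≤ n := le_trans (le_max_left N 1) hn
    have hnpos : (0:ℝ) < (n:ℝ) := by exact_mod_cast hn1
    have hb := hbound n hnN
    have step : (pullCount I i n : ℝ) / n
        ≤ ((N:ℝ) + 1 + C * Real.log n / ((μ istar - μ i)/2)^2) / n :=
      (div_le_div_iff_of_pos_right hnpos).mpr hb
    refine le_trans step (le_of_eq ?_)
    field_simp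

theorem ucb1_average_reward_tendsto_optimal_mean
    {K : ℕ} (hK : 2 ≤ K) (x : Fin K → ℕ → ℝ) (I : ℕ → Fin K)
    (μ : Fin K → ℝ)
    (hconv : ∀ i : Fin K,
      Tendsto (fun m : ℕ => (1 / (m : ℝ)) * ∑ u ∈ Finset.Icc 1 m, x i u) atTop (nhds (μ i)))
    (istar : Fin K)
    (huniq : ∀ i : Fin K, i ≠ istar → μ i < μ istar)
    (C : ℝ) (hC : 0 < C)
    (hUCB : UCB1Rule x I C) :
    Tendsto (fun n : ℕ => (1 / (n : ℝ)) * ∑ t ∈ Finset.Icc 1 n, x (I t) (pullCount I (I t) t))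
      atTop (nhds (μ istar)) := by
  have hpc := fun j => pc_tendsto_atTop hK x I μ hconv C hC hUCB j
  have hg : ∀ j : Fin K, Tendsto (fun n : ℕ => (1 / (pullCount I j n : ℝ))
      * ∑ u ∈ Finset.Icc 1 (pullCount I j n), x j u) atTop (nhds (μ j)) :=
    fun j => (hconv j).comp (hpc j)
  have hz : ∀ j : Fin K, j ≠ istar →
      Tendsto (fun n : ℕ => (pullCount I j n : ℝ)/n) atTop (nhds 0) :=
    fun j hj => pc_div_tendsto_zero hK x I μ hconv istar huniq C hC hUCB j hj
  have hstar : Tendsto (fun n : ℕ => (pullCount I istar n : ℝ)/n) atTop (nhds 1) := by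
    have hsum0 : Tendsto (fun n : ℕ =>
        ∑ j ∈ Finset.univ.erase istar, (pullCount I j n : ℝ)/n) atTop (nhds 0) := by
      have h := tendsto_finset_sum (Finset.univ.erase istar)
        (fun j hj => hz j (Finset.ne_of_mem_erase hj))
      simpa using h
    have h1 : Tendsto (fun n : ℕ =>
        1 - ∑ j ∈ Finset.univ.erase istar, (pullCount I j n : ℝ)/n) atTop (nhds 1) := by
      have := tendsto_const_nhds (x := (1:ℝ)) (f := atTop (α := ℕ))
      simpa using this.sub hsum0
    apply h1.congr'
    filter_upwards [eventually_ge_atTop 1] with n hn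
    have hnpos : (0:ℝ) < (n:ℝ) := by exact_mod_cast hn
    have hsplit : (pullCount I istar n : ℝ)
        + ∑ j ∈ Finset.univ.erase istar, (pullCount I j n : ℝ) = (n:ℝ) := by
      have h3 := Finset.add_sum_erase Finset.univ (fun j => pullCount I j n)
        (Finset.mem_univ istar)
      rw [pc_sum I n] at h3
      exact_mod_cast h3
    have hfull : ∑ i : Fin K, (pullCount I i n : ℝ) = (n:ℝ) := by
      exact_mod_cast pc_sum I n
    rw [← Finset.sum_div]
    field_simp
    linarith
  have hterm : ∀ j : Fin K, Tendsto (fun n : ℕ =>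
      ((pullCount I j n : ℝ)/n) * ((1 / (pullCount I j n : ℝ))
        * ∑ u ∈ Finset.Icc 1 (pullCount I j n), x j u))
      atTop (nhds (if j = istar then μ istar else 0)) := by
    intro j
    by_cases hj : j = istar
    · subst hj; rw [if_pos rfl]; simpa using hstar.mul (hg j)
    · rw [if_neg hj]; simpa using (hz j hj).mul (hg j)
  have hsum : Tendsto (fun n : ℕ => ∑ j : Fin K, ((pullCount I j n : ℝ)/n)
      * ((1 / (pullCount I j n : ℝ)) * ∑ u ∈ Finset.Icc 1 (pullCount I j n), x j u))
      atTop (nhds (μ istar)) := by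
    have h := tendsto_finset_sum Finset.univ (fun j (_ : j ∈ Finset.univ) => hterm j)
    have hL : ∑ j : Fin K, (if j = istar then μ istar else 0) = μ istar := by simp
    rwa [hL] at h
  apply hsum.congr'
  filter_upwards [eventually_all.mpr (fun j => (hpc j).eventually_ge_atTop 1),
    eventually_ge_atTop 1] with n hall hn
  have hnpos : (0:ℝ) < (n:ℝ) := by exact_mod_cast hn
  rw [reward_decomp x I n, Finset.mul_sum]
  apply Finset.sum_congr rfl
  intro j _
  have hpcj : (0:ℝ) < (pullCount I j n : ℝ) := by exact_mod_cast hall j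
  field_simp
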